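/- arXiv:1411.7092 — 3 statements merged into one kernel-verified Lean document; each statement's English description precedes it below -/
import Mathlib

section
/- Let T be a symmetric positive definite linear operator on an n-dimensional real inner product space V with eigenvalues 0 < λ₁ ≤ ⋯ ≤ λₙ counted with multiplicity. Suppose β > 0 satisfies ⟨Tv, v⟩ ≤ β⟨v, v⟩ for all v ∈ V, and suppose there exist α > 0, 0 ≤ m < n, and a subspace W ⊆ V with dim W = n − m such that ⟨Tv, v⟩ ≥ α⟨v, v⟩ for all v ∈ W. Then the m-th effective condition number of T satisfies κ_m(T) = λₙ / λ_{m+1} ≤ β/α. -/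
open scoped RealInnerProductSpace

/-- If `T` is a symmetric positive definite operator on an `n`-dimensional real inner
product space with eigenvalues `0 < λ₁ ≤ ⋯ ≤ λₙ` (counted with multiplicity, realized by an
orthonormal eigenbasis), `⟪Tv, v⟫ ≤ β⟪v, v⟫` for all `v`, and `⟪Tv, v⟫ ≥ α⟪v, v⟫` on a
subspace `W` of dimension `n - m` (with `0 ≤ m < n`, `α > 0`), then the `m`-th effective
condition number satisfies `κ_m(T) = λₙ / λ_{m+1} ≤ β / α`. -/
theorem stmt_2 {V : Type*} [NormedAddCommGroup V] [InnerProductSpace ℝ V]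
    [FiniteDimensional ℝ V] (n : ℕ) (hn : Module.finrank ℝ V = n)
    (T : V →ₗ[ℝ] V) (hT : T.IsSymmetric)
    (hTpos : ∀ v : V, v ≠ 0 → 0 < ⟪T v, v⟫)
    (lam : Fin n → ℝ) (hpos : ∀ i, 0 < lam i) (hmono : Monotone lam)
    (b : OrthonormalBasis (Fin n) ℝ V) (hb : ∀ i, T (b i) = lam i • b i)
    (β : ℝ) (hβ : 0 < β) (hupper : ∀ v : V, ⟪T v, v⟫ ≤ β * ⟪v, v⟫)
    (α : ℝ) (hα : 0 < α) (m : ℕ) (hm : m < n)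
    (W : Submodule ℝ V) (hW : Module.finrank ℝ W = n - m)
    (hlower : ∀ v ∈ W, α * ⟪v, v⟫ ≤ ⟪T v, v⟫) :
    lam ⟨n - 1, by omega⟩ / lam ⟨m, hm⟩ ≤ β / α := by
  -- key computation: quadratic form in coordinates
  have hrepr : ∀ v : V, ∀ i, b.repr (T v) i = lam i * b.repr v i := by
    intro v i
    rw [b.repr_apply_apply, b.repr_apply_apply, ← hT (b i) v, hb i,
      real_inner_smul_left]
  have hinner : ∀ v : V, ⟪v, v⟫ = ∑ i, b.repr v i * b.repr v i := by
    intro v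
    rw [← b.repr.inner_map_map v v]
    simp only [PiLp.inner_apply, RCLike.inner_apply, conj_trivial]
  have hquad : ∀ v : V, ⟪T v, v⟫ = ∑ i, lam i * (b.repr v i * b.repr v i) := by
    intro v
    rw [← b.repr.inner_map_map (T v) v]
    simp only [PiLp.inner_apply, RCLike.inner_apply, conj_trivial]
    exact Finset.sum_congr rfl fun i _ => by rw [hrepr v i, mul_left_comm]
  -- upper bound: lam (n-1) ≤ β
  have hβ' : lam ⟨n - 1, by omega⟩ ≤ β := by
    set i : Fin n := ⟨n - 1, by omega⟩
    have h1 : ⟪b i, b i⟫ = 1 := by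
      rw [real_inner_self_eq_norm_sq, b.orthonormal.1 i]; norm_num
    have h2 := hupper (b i)
    rw [hb i, real_inner_smul_left, h1] at h2
    simpa using h2
  -- lower bound: α ≤ lam m
  have hαm : α ≤ lam ⟨m, hm⟩ := by
    let f : W →ₗ[ℝ] (Fin (n - (m + 1)) → ℝ) :=
      { toFun := fun w => fun j => b.repr (w : V) ⟨m + 1 + j, by omega⟩
        map_add' := by intro x y; ext j; simp
        map_smul' := by intro c x; ext j; simp }
    have hni : LinearMap.ker f ≠ ⊥ := by
      intro h
      have := LinearMap.finrank_le_finrank_of_injective (LinearMap.ker_eq_bot.1 h)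
      rw [hW, Module.finrank_pi] at this
      simp only [Fintype.card_fin] at this
      omega
    obtain ⟨x, hxker, hx0⟩ := Submodule.exists_mem_ne_zero_of_ne_bot hni
    have hxne : (x : V) ≠ 0 := fun h => hx0 (Subtype.ext h)
    have hf0 : f x = 0 := hxker
    have hcoord : ∀ i : Fin n, m < (i : ℕ) → b.repr (x : V) i = 0 := by
      intro i hi
      have h1 := congrFun hf0 ⟨(i : ℕ) - (m + 1), by omega⟩
      have h2 : (⟨m + 1 + ((i : ℕ) - (m + 1)), by omega⟩ : Fin n) = i :=
        Fin.ext (by simp; omega)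
      simp only [f, LinearMap.coe_mk, AddHom.coe_mk, Pi.zero_apply] at h1
      rw [h2] at h1
      exact h1
    have hle : ⟪T (x : V), (x : V)⟫ ≤ lam ⟨m, hm⟩ * ⟪(x : V), (x : V)⟫ := by
      rw [hquad, hinner, Finset.mul_sum]
      apply Finset.sum_le_sum
      intro i _
      by_cases hi : m < (i : ℕ)
      · rw [hcoord i hi]; simp
      · push_neg at hi
        have : lam i ≤ lam ⟨m, hm⟩ := hmono hi
        nlinarith [mul_self_nonneg (b.repr (x : V) i)]
    have hxpos : 0 < ⟪(x : V), (x : V)⟫ := by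
      rw [real_inner_self_eq_norm_sq]; exact pow_pos (norm_pos_iff.2 hxne) 2
    have h1 : α * ⟪(x : V), (x : V)⟫ ≤ lam ⟨m, hm⟩ * ⟪(x : V), (x : V)⟫ :=
      le_trans (hlower (x : V) x.2) hle
    nlinarith [h1, hxpos]
  have hmpos := hpos ⟨m, hm⟩
  exact div_le_div₀ hβ.le hβ' hα hαm
end

section
/- Let H be a real Hilbert space and let V₀ ⊆ V₁ ⊆ ⋯ ⊆ V_L be a finite increasing chain of closed subspaces of H, with Q_k the orthogonal projection of H onto V_k for each k. Let 0 < γ < 1. Then for every v ∈ V_L one has Σ_{k=1}^{L} γ^{−2k} ‖v − Q_{k−1} v‖² ≤ (1 − γ²)^{−1} Σ_{k=1}^{L} γ^{−2k} ‖Q_k v − Q_{k−1} v‖². -/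
/-- Multilevel stable decomposition estimate: for a finite increasing chain of closed
subspaces `V 0 ⊆ ⋯ ⊆ V L` of a real Hilbert space with orthogonal projections `Q k` and
`0 < γ < 1`, every `v ∈ V L` satisfies
`∑_{k=1}^{L} γ^{−2k} ‖v − Q_{k−1} v‖² ≤ (1 − γ²)⁻¹ ∑_{k=1}^{L} γ^{−2k} ‖Q_k v − Q_{k−1} v‖²`. -/
theorem stmt_6 {H : Type*} [NormedAddCommGroup H] [InnerProductSpace ℝ H] [CompleteSpace H]
    (L : ℕ) (V : ℕ → Submodule ℝ H) (hclosed : ∀ k, IsClosed (V k : Set H))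
    [inst : ∀ k, Submodule.HasOrthogonalProjection (V k)]
    (hmono : ∀ k < L, V k ≤ V (k + 1))
    (γ : ℝ) (hγ0 : 0 < γ) (hγ1 : γ < 1)
    (v : H) (hv : v ∈ V L) :
    ∑ k ∈ Finset.Icc 1 L,
        (γ ^ k)⁻¹ ^ 2 * ‖v - ((V (k - 1)).orthogonalProjectionOnto v : H)‖ ^ 2
      ≤ (1 - γ ^ 2)⁻¹ *
        ∑ k ∈ Finset.Icc 1 L,
          (γ ^ k)⁻¹ ^ 2 *
            ‖((V k).orthogonalProjectionOnto v : H) - ((V (k - 1)).orthogonalProjectionOnto v : H)‖ ^ 2 := by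
  set Q : ℕ → H := fun k => ((V k).orthogonalProjectionOnto v : H) with hQ
  set b : ℕ → ℝ := fun j => ‖Q j - Q (j - 1)‖ ^ 2 with hb
  set w : ℕ → ℝ := fun k => (γ ^ k)⁻¹ ^ 2 with hw
  -- Pythagoras/telescoping identity
  have key : ∀ d m, m + d = L → ‖v - Q m‖ ^ 2 = ∑ j ∈ Finset.Icc (m + 1) L, b j := by
    intro d
    induction d with
    | zero =>
      intro m hm
      have hm' : m = L := by omega
      subst hm'
      have hQL : Q m = v := by
        simp only [hQ]
        exact (V m).starProjection_eq_self_iff.2 hv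
      rw [hQL, Finset.Icc_eq_empty (by omega)]
      simp
    | succ d ih =>
      intro m hm
      have hmL : m < L := by omega
      have h1 : ‖v - Q (m + 1)‖ ^ 2 = ∑ j ∈ Finset.Icc (m + 2) L, b j := ih (m + 1) (by omega)
      -- Pythagoras
      have hx : v - Q (m + 1) ∈ (V (m + 1))ᗮ :=
        (V (m + 1)).sub_starProjection_mem_orthogonal v
      have hy : Q (m + 1) - Q m ∈ V (m + 1) := by
        exact Submodule.sub_mem _ ((V (m+1)).orthogonalProjectionOnto v).2
          (hmono m hmL ((V m).orthogonalProjectionOnto v).2)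
      have hinner : inner (𝕜 := ℝ) (v - Q (m + 1)) (Q (m + 1) - Q m) = (0:ℝ) := by rw [real_inner_comm]; exact hx _ hy
      have hpyth : ‖v - Q m‖ ^ 2 = ‖v - Q (m + 1)‖ ^ 2 + ‖Q (m + 1) - Q m‖ ^ 2 := by
        have : v - Q m = (v - Q (m + 1)) + (Q (m + 1) - Q m) := by abel
        rw [this, norm_add_sq_real, hinner]
        ring
      have hsplit : Finset.Icc (m + 1) L = insert (m + 1) (Finset.Icc (m + 2) L) := by
        ext x
        simp only [Finset.mem_Icc, Finset.mem_insert]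
        omega
      rw [hpyth, h1, hsplit, Finset.sum_insert (by simp)]
      have : b (m + 1) = ‖Q (m + 1) - Q m‖ ^ 2 := by simp [hb]
      rw [this]; ring
  have hγ2 : (0:ℝ) < 1 - γ ^ 2 := by nlinarith
  have hγne : γ ≠ 0 := ne_of_gt hγ0
  -- geometric bound
  have geo : ∀ j : ℕ, ∑ k ∈ Finset.Icc 1 j, w k ≤ (1 - γ ^ 2)⁻¹ * w j := by
    intro j
    induction j with
    | zero =>
      rw [Finset.Icc_eq_empty (by omega)]
      simp only [Finset.sum_empty, hw, pow_zero, inv_one, one_pow, mul_one]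
      positivity
    | succ n ih =>
      rw [Finset.sum_Icc_succ_top (by omega)]
      have heq : (1 - γ ^ 2)⁻¹ * w (n + 1) = (1 - γ ^ 2)⁻¹ * w n + w (n + 1) := by
        simp only [hw]
        field_simp
        ring
      rw [heq]
      linarith
  have hbnn : ∀ j, 0 ≤ b j := fun j => by positivity
  have hwnn : ∀ k, 0 ≤ w k := fun k => by positivity
  calc ∑ k ∈ Finset.Icc 1 L, w k * ‖v - Q (k - 1)‖ ^ 2
      = ∑ k ∈ Finset.Icc 1 L, ∑ j ∈ Finset.Icc k L, w k * b j := by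
        refine Finset.sum_congr rfl fun k hk => ?_
        obtain ⟨hk1, hkL⟩ := Finset.mem_Icc.mp hk
        rw [← Finset.mul_sum]
        congr 1
        have h := key (L - (k - 1)) (k - 1) (by omega)
        rwa [show k - 1 + 1 = k from by omega] at h
    _ = ∑ j ∈ Finset.Icc 1 L, ∑ k ∈ Finset.Icc 1 j, w k * b j := by
        refine Finset.sum_comm' fun k j => ?_
        simp only [Finset.mem_Icc]
        omega
    _ = ∑ j ∈ Finset.Icc 1 L, (∑ k ∈ Finset.Icc 1 j, w k) * b j := by
        refine Finset.sum_congr rfl fun j hj => ?_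
        rw [Finset.sum_mul]
    _ ≤ ∑ j ∈ Finset.Icc 1 L, ((1 - γ ^ 2)⁻¹ * w j) * b j := by
        refine Finset.sum_le_sum fun j hj => ?_
        exact mul_le_mul_of_nonneg_right (geo j) (hbnn j)
    _ = (1 - γ ^ 2)⁻¹ * ∑ j ∈ Finset.Icc 1 L, w j * b j := by
        rw [Finset.mul_sum]
        exact Finset.sum_congr rfl fun j hj => by ring
end

section
/- Let V be a finite-dimensional real inner product space and let V₀, V₁, …, V_L be linear subspaces of V with V = V₀ + V₁ + ⋯ + V_L. For each k let Q_k : V → V_k denote the orthogonal projection onto V_k, and let R_k : V_k → V_k be a symmetric positive definite linear map. Define B : V → V by B v = Σ_{k=0}^{L} R_k (Q_k v), where R_k (Q_k v) ∈ V_k ⊆ V. Then B is symmetric positive definite, and for every v ∈ V, ⟨B⁻¹ v, v⟩ = min { Σ_{k=0}^{L} ⟨R_k⁻¹ v_k, v_k⟩ : v_k ∈ V_k for each k and Σ_{k=0}^{L} v_k = v }. -/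
open scoped RealInnerProductSpace

private lemma aux_expand {V : Type*} [NormedAddCommGroup V] [InnerProductSpace ℝ V]
    (K : Submodule ℝ V) (Rk : K →ₗ[ℝ] K)
    (hsym : ∀ x y : K, ⟪((Rk x : K) : V), (y : V)⟫ = ⟪(x : V), ((Rk y : K) : V)⟫)
    (a b : K) :
    ⟪((Rk (b - a) : K) : V), ((b - a : K) : V)⟫
      = ⟪((Rk b : K) : V), (b : V)⟫ - 2 * ⟪((Rk b : K) : V), (a : V)⟫
        + ⟪((Rk a : K) : V), (a : V)⟫ := by
  rw [map_sub, Submodule.coe_sub, Submodule.coe_sub, inner_sub_left, inner_sub_right,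
    inner_sub_right, hsym a b, real_inner_comm ((a : K) : V) ((Rk b : K) : V)]
  ring

/-- BPX identity: let `V` be a finite-dimensional real inner product space, decomposed as a
(not necessarily direct) sum of subspaces `V = V₀ + ⋯ + V_L`, let `Q k` be the orthogonal
projection onto `Vsub k`, and let `R k : Vsub k → Vsub k` be symmetric positive definite
with inverse `S k`. Then `B := ∑ k, R k ∘ Q k` is symmetric positive definite, and for every
`v`, `⟪B⁻¹ v, v⟫` equals the minimum of `∑ k ⟪(R k)⁻¹ v_k, v_k⟫` over all decompositions
`v = ∑ k v_k` with `v_k ∈ Vsub k`. -/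
theorem stmt_11 {V : Type*} [NormedAddCommGroup V] [InnerProductSpace ℝ V]
    [FiniteDimensional ℝ V] (L : ℕ) (Vsub : Fin (L + 1) → Submodule ℝ V)
    (hsum : (⨆ k, Vsub k) = ⊤)
    (R S : ∀ k, Vsub k →ₗ[ℝ] Vsub k)
    (hRsymm : ∀ k (x y : Vsub k), ⟪((R k x : Vsub k) : V), (y : V)⟫ = ⟪(x : V), ((R k y : Vsub k) : V)⟫)
    (hRpos : ∀ k (x : Vsub k), x ≠ 0 → 0 < ⟪((R k x : Vsub k) : V), (x : V)⟫)
    (hS : ∀ k, (R k).comp (S k) = LinearMap.id ∧ (S k).comp (R k) = LinearMap.id)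
    (B : V →ₗ[ℝ] V)
    (hB : ∀ v : V, B v = ∑ k, (((R k) ((Vsub k).orthogonalProjection v) : Vsub k) : V)) :
    (∀ x y : V, ⟪B x, y⟫ = ⟪x, B y⟫) ∧ (∀ v : V, v ≠ 0 → 0 < ⟪B v, v⟫) ∧
    (∀ v w : V, B w = v →
      IsLeast {r : ℝ | ∃ u : ∀ k, Vsub k, (∑ k, ((u k : V))) = v ∧
        r = ∑ k, ⟪(((S k) (u k) : Vsub k) : V), ((u k : V))⟫} ⟪w, v⟫) := by
  have hproj : ∀ (k : Fin (L + 1)) (x : Vsub k) (v : V),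
      ⟪(x : V), v⟫ = ⟪(x : V), (((Vsub k).orthogonalProjection v : Vsub k) : V)⟫ := by
    intro k x v
    have h := Submodule.inner_orthogonalProjectionOnto_eq_of_mem_left (K := Vsub k) x v
    rw [Submodule.coe_inner] at h
    exact h.symm
  have hnn : ∀ (k : Fin (L + 1)) (x : Vsub k), 0 ≤ ⟪((R k x : Vsub k) : V), (x : V)⟫ := by
    intro k x
    rcases eq_or_ne x 0 with h | h
    · simp [h]
    · exact (hRpos k x h).le
  have key : ∀ x y : V, ⟪B x, y⟫ =
      ∑ k, ⟪((R k ((Vsub k).orthogonalProjection x) : Vsub k) : V),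
        (((Vsub k).orthogonalProjection y : Vsub k) : V)⟫ := by
    intro x y
    rw [hB, sum_inner]
    exact Finset.sum_congr rfl fun k _ => hproj k _ y
  have hsymm : ∀ x y : V, ⟪B x, y⟫ = ⟪x, B y⟫ := by
    intro x y
    rw [key, ← real_inner_comm x (B y), key]
    refine Finset.sum_congr rfl fun k _ => ?_
    rw [hRsymm]
    exact real_inner_comm _ _
  refine ⟨hsymm, ?_, ?_⟩
  · intro v hv
    rw [key]
    have hex : ∃ k, (Vsub k).orthogonalProjection v ≠ 0 := by
      by_contra h
      push_neg at h
      have hv' : v ∈ (⨆ k, Vsub k)ᗮ := by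
        rw [← Submodule.iInf_orthogonal]
        exact (Submodule.mem_iInf _).mpr fun k => Submodule.orthogonalProjectionOnto_eq_zero_iff.mp (h k)
      rw [hsum, Submodule.top_orthogonal_eq_bot, Submodule.mem_bot] at hv'
      exact hv hv'
    obtain ⟨k0, hk0⟩ := hex
    exact Finset.sum_pos' (fun k _ => hnn k _) ⟨k0, Finset.mem_univ _, hRpos k0 _ hk0⟩
  · intro v w hw
    have hRS : ∀ (k) (x : Vsub k), R k (S k x) = x := fun k x =>
      LinearMap.congr_fun (hS k).1 x
    have hSR : ∀ (k) (x : Vsub k), S k (R k x) = x := fun k x =>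
      LinearMap.congr_fun (hS k).2 x
    have hwv : ⟪w, v⟫ = ∑ k, ⟪((R k ((Vsub k).orthogonalProjection w) : Vsub k) : V),
        (((Vsub k).orthogonalProjection w : Vsub k) : V)⟫ := by
      rw [← hw, real_inner_comm, key]
    constructor
    · refine ⟨fun k => R k ((Vsub k).orthogonalProjection w), ?_, ?_⟩
      · rw [← hB w, hw]
      · rw [hwv]
        refine Finset.sum_congr rfl fun k _ => ?_
        rw [hSR k]
        exact real_inner_comm _ _
    · rintro r ⟨u, husum, rfl⟩
      have hA : ∑ k, ⟪(u k : V), (((Vsub k).orthogonalProjection w : Vsub k) : V)⟫ = ⟪w, v⟫ := by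
        rw [Finset.sum_congr rfl (fun k _ => (hproj k (u k) w).symm), ← sum_inner, husum,
          real_inner_comm]
      have hterm : ∀ k : Fin (L + 1),
          ⟪((R k (S k (u k) - (Vsub k).orthogonalProjection w) : Vsub k) : V),
            ((S k (u k) - (Vsub k).orthogonalProjection w : Vsub k) : V)⟫
          = ⟪((S k (u k) : Vsub k) : V), (u k : V)⟫
            - 2 * ⟪(u k : V), (((Vsub k).orthogonalProjection w : Vsub k) : V)⟫
            + ⟪((R k ((Vsub k).orthogonalProjection w) : Vsub k) : V),
                (((Vsub k).orthogonalProjection w : Vsub k) : V)⟫ := by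
        intro k
        rw [aux_expand (Vsub k) (R k) (hRsymm k), hRS k (u k),
          real_inner_comm (((S k (u k) : Vsub k) : V)) ((u k : V))]
      have hnonneg : 0 ≤ ∑ k, ⟪((R k (S k (u k) - (Vsub k).orthogonalProjection w) : Vsub k) : V),
          ((S k (u k) - (Vsub k).orthogonalProjection w : Vsub k) : V)⟫ :=
        Finset.sum_nonneg fun k _ => hnn k _
      have hexp : ∑ k, ⟪((R k (S k (u k) - (Vsub k).orthogonalProjection w) : Vsub k) : V),
          ((S k (u k) - (Vsub k).orthogonalProjection w : Vsub k) : V)⟫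
          = (∑ k, ⟪((S k (u k) : Vsub k) : V), (u k : V)⟫) - ⟪w, v⟫ := by
        rw [Finset.sum_congr rfl fun k _ => hterm k, Finset.sum_add_distrib,
          Finset.sum_sub_distrib, ← Finset.mul_sum, hA, ← hwv]
        ring
      rw [hexp] at hnonneg
      linarith
end
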